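/- Assume the non-degeneracy condition and ‖W_n‖ ≤ 1 for all n, and let U₀ be an exact joint triangularizer of {M_n}. Set ε = γ/(2κ(V)⁴) with γ = min_{j<j'} Σ_{n=1}^N (Λ_{nj} − Λ_{nj'})², A_α = 32 Σ_{n=1}^N ‖M_n‖², and A_σ = 16 √N √(Σ_{n=1}^N ‖M_n‖²). Then there is a constant C > 0 (depending only on the M_n) such that for every skew-symmetric Y with ‖Y‖ = 1 and every α ≥ 0 with α ≤ (2ε − σ A_σ)/A_α − C(α + σ)², the Hessian of the loss L at U = U₀ exp(αY) is positive definite, i.e. d²/dt² L(U e^{tX})|_{t=0} > 0 for all nonzero skew-symmetric X. -/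

import Mathlib

open Matrix Kronecker BigOperators

noncomputable section

/-- Square real matrices. -/
abbrev Mat (d : ℕ) := Matrix (Fin d) (Fin d) ℝ

/-- Strictly lower-triangular part: `[low A]_{ij} = A_{ij}` if `i > j`, else `0`. -/
def lowPart {d : ℕ} (A : Mat d) : Mat d :=
  Matrix.of fun i j => if (j : ℕ) < (i : ℕ) then A i j else 0

/-- Frobenius norm. -/
def frob {m n : Type*} [Fintype m] [Fintype n] (A : Matrix m n ℝ) : ℝ :=
  Real.sqrt (∑ i, ∑ j, (A i j) ^ 2)

/-- Euclidean norm of a vector. -/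
def enorm' {m : Type*} [Fintype m] (v : m → ℝ) : ℝ :=
  Real.sqrt (∑ i, (v i) ^ 2)

/-- Largest singular value. -/
def sigMax {m n : Type*} [Fintype m] [Fintype n] (A : Matrix m n ℝ) : ℝ :=
  sSup {r | ∃ x : n → ℝ, enorm' x = 1 ∧ r = enorm' (A.mulVec x)}

/-- Smallest singular value. -/
def sigMin {m n : Type*} [Fintype m] [Fintype n] (A : Matrix m n ℝ) : ℝ :=
  sInf {r | ∃ x : n → ℝ, enorm' x = 1 ∧ r = enorm' (A.mulVec x)}

/-- Spectral norm (largest singular value). -/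
def specNorm {m n : Type*} [Fintype m] [Fintype n] (A : Matrix m n ℝ) : ℝ := sigMax A

/-- Condition number `κ(A) = σ_max(A)/σ_min(A)`. -/
def condNum {m n : Type*} [Fintype m] [Fintype n] (A : Matrix m n ℝ) : ℝ :=
  sigMax A / sigMin A

/-- Matrix exponential. -/
def matExp {d : ℕ} (A : Mat d) : Mat d := ∑' k : ℕ, ((k.factorial : ℝ))⁻¹ • A ^ k

/-- Column-wise vectorization: index `(j, i)` holds the `(i, j)` entry. -/
def vecM {d : ℕ} (A : Mat d) : Fin d × Fin d → ℝ := fun p => A p.2 p.1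

/-- Inverse of the column-wise vectorization. -/
def matM {d : ℕ} (v : Fin d × Fin d → ℝ) : Mat d := Matrix.of fun i j => v (j, i)

/-- The `d² × d²` diagonal 0/1 matrix `Low` with `Low (vec A) = vec (low A)`. -/
def lowOp (d : ℕ) : Matrix (Fin d × Fin d) (Fin d × Fin d) ℝ :=
  Matrix.diagonal fun p => if (p.1 : ℕ) < (p.2 : ℕ) then 1 else 0

/-- `P` is a valid `P_low` projector: `P Pᵀ = 1` and `Pᵀ P = Low`. -/
def IsPlow {d k : ℕ} (P : Matrix (Fin k) (Fin d × Fin d) ℝ) : Prop :=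
  P * Pᵀ = 1 ∧ Pᵀ * P = lowOp d

/-- Orthogonal matrix. -/
def IsOrtho {d : ℕ} (U : Mat d) : Prop := Uᵀ * U = 1

/-- Skew-symmetric matrix. -/
def IsSkew {d : ℕ} (X : Mat d) : Prop := Xᵀ = -X

/-- Matrix commutator. -/
def mcomm {d : ℕ} (A B : Mat d) : Mat d := A * B - B * A

/-- `U₀` is an exact joint triangularizer of the family `M`. -/
def ExactTriang {d N : ℕ} (U₀ : Mat d) (M : Fin N → Mat d) : Prop :=
  IsOrtho U₀ ∧ ∀ n, lowPart (U₀ᵀ * M n * U₀) = 0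

/-- The joint triangularization loss `L(U) = Σₙ ‖low(Uᵀ M̂ₙ U)‖²`. -/
def Loss {d N : ℕ} (Mh : Fin N → Mat d) (U : Mat d) : ℝ :=
  ∑ n, (frob (lowPart (Uᵀ * Mh n * U))) ^ 2

/-- Stationary point of the loss on the orthogonal group: the Riemannian
gradient vanishes, i.e. all directional derivatives along skew directions vanish. -/
def IsStationary' {d N : ℕ} (Mh : Fin N → Mat d) (U : Mat d) : Prop :=
  IsOrtho U ∧ ∀ X : Mat d, IsSkew X →
    deriv (fun t : ℝ => Loss Mh (U * matExp (t • X))) 0 = 0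

/-- The operator `t̃ = P_low (1 ⊗ Aᵀ − A ⊗ 1) P_lowᵀ`. -/
def ttil {d k : ℕ} (P : Matrix (Fin k) (Fin d × Fin d) ℝ) (A : Mat d) :
    Matrix (Fin k) (Fin k) ℝ :=
  P * ((1 : Mat d) ⊗ₖ Aᵀ - A ⊗ₖ (1 : Mat d)) * Pᵀ

/-- The joint eigengap `γ = min_{i<i'} Σₙ (Λ_{ni} − Λ_{ni'})²`. -/
def gapMin {d N : ℕ} (Λ : Fin N → Fin d → ℝ) : ℝ :=
  sInf {r | ∃ i i' : Fin d, i < i' ∧ r = ∑ n, (Λ n i - Λ n i') ^ 2}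


/-! ### Auxiliary machinery for the proof -/

section AuxStructural

variable {d N : ℕ}

/-- Upper triangular (strictly lower part vanishes). -/
def Upp {d : ℕ} (A : Mat d) : Prop := ∀ i j : Fin d, (j : ℕ) < (i : ℕ) → A i j = 0

lemma Upp.one : Upp (1 : Mat d) := by
  intro i j h
  exact Matrix.one_apply_ne (by intro e; rw [e] at h; omega)

lemma Upp.mul {A B : Mat d} (hA : Upp A) (hB : Upp B) : Upp (A * B) := by
  intro i j h
  rw [Matrix.mul_apply]
  refine Finset.sum_eq_zero fun k _ => ?_
  rcases lt_or_ge (k : ℕ) (i : ℕ) with hk | hk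
  · rw [hA i k hk, zero_mul]
  · rw [hB k j (by omega), mul_zero]

lemma Upp.diag_mul {A B : Mat d} (hA : Upp A) (hB : Upp B) (i : Fin d) :
    (A * B) i i = A i i * B i i := by
  rw [Matrix.mul_apply]
  refine Finset.sum_eq_single i (fun k _ hk => ?_) (by simp)
  rcases lt_or_ge (k : ℕ) (i : ℕ) with h | h
  · rw [hA i k h, zero_mul]
  · have hik : (i : ℕ) < (k : ℕ) := lt_of_le_of_ne h (fun e => hk (Fin.ext e.symm))
    rw [hB k i hik, mul_zero]

/-- Conjugation of a diagonal matrix. -/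
def conj {d : ℕ} (G : Mat d) (v : Fin d → ℝ) : Mat d := G * Matrix.diagonal v * G⁻¹

variable (G : Mat d)

lemma conj_mul_conj (hGl : G⁻¹ * G = 1) (v w : Fin d → ℝ) :
    conj G (v * w) = conj G v * conj G w := by
  simp only [conj]
  rw [show diagonal (v * w) = diagonal v * diagonal w from (Matrix.diagonal_mul_diagonal v w).symm]
  calc G * (diagonal v * diagonal w) * G⁻¹
      = G * diagonal v * (G⁻¹ * G) * diagonal w * G⁻¹ := by rw [hGl]; noncomm_ring
    _ = G * diagonal v * G⁻¹ * (G * diagonal w * G⁻¹) := by noncomm_ring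

lemma conj_one (hGr : G * G⁻¹ = 1) : conj G (1 : Fin d → ℝ) = 1 := by
  rw [conj, show (1 : Fin d → ℝ) = fun _ => (1:ℝ) from rfl, Matrix.diagonal_one,
    Matrix.mul_one, hGr]

lemma conj_smul (c : ℝ) (v : Fin d → ℝ) : conj G (c • v) = c • conj G v := by
  simp [conj, Matrix.diagonal_smul, Matrix.smul_mul, Matrix.mul_smul]

lemma conj_zero : conj G (0 : Fin d → ℝ) = 0 := by
  simpa using conj_smul G (0:ℝ) 0

lemma conj_sub (v w : Fin d → ℝ) : conj G (v - w) = conj G v - conj G w := by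
  simp only [conj]
  rw [show diagonal (v - w) = diagonal v - diagonal w by rw [Matrix.diagonal_sub]; rfl]
  rw [Matrix.mul_sub, Matrix.sub_mul]

lemma conj_add (v w : Fin d → ℝ) : conj G (v + w) = conj G v + conj G w := by
  simp only [conj]
  rw [show diagonal (v + w) = diagonal v + diagonal w by rw [Matrix.diagonal_add]; rfl]
  rw [Matrix.mul_add, Matrix.add_mul]

lemma conj_trace (hGl : G⁻¹ * G = 1) (v : Fin d → ℝ) : ∑ i, conj G v i i = ∑ i, v i := by
  have h1 : ∑ i, conj G v i i = Matrix.trace (conj G v) := by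
    simp [Matrix.trace, Matrix.diag]
  rw [h1, conj, Matrix.trace_mul_cycle, hGl, Matrix.one_mul, Matrix.trace_diagonal]

/-- Values 0/1 summing to 1 pick out an index. -/
lemma exists_unique_one {α : Type*} [Fintype α] [DecidableEq α] (f : α → ℝ)
    (h01 : ∀ k, f k = 0 ∨ f k = 1) (hsum : ∑ k, f k = 1) : ∃ k, f k = 1 := by
  by_contra h
  push_neg at h
  have hz : ∀ k, f k = 0 := fun k => (h01 k).resolve_right (h k)
  rw [Finset.sum_eq_zero (fun k _ => hz k)] at hsum
  norm_num at hsum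

/-- The indicator vectors lie in the algebra generated by the `Λ n`, hence are "good". -/
lemma good_indicator (hGr : G * G⁻¹ = 1) (hGl : G⁻¹ * G = 1) (Λ : Fin N → Fin d → ℝ)
    (hGood : ∀ n, Upp (conj G (Λ n)))
    (hnd : ∀ i i' : Fin d, i ≠ i' → ∃ n, Λ n i ≠ Λ n i') (k : Fin d) :
    ∃ g : Fin d → ℝ, Upp (conj G g) ∧ g = fun i => if i = k then (1 : ℝ) else 0 := by
  classical
  set s : Finset (Fin d) := Finset.univ.erase k with hs
  have hpick : ∀ j ∈ s, ∃ n, Λ n k ≠ Λ n j := by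
    intro j hj
    exact hnd k j (Finset.ne_of_mem_erase hj).symm
  choose pick hpickspec using hpick
  set g : Fin d → ℝ := fun i => ∏ j ∈ s.attach,
      ((Λ (pick j.1 j.2) i - Λ (pick j.1 j.2) j.1) / (Λ (pick j.1 j.2) k - Λ (pick j.1 j.2) j.1))
    with hg
  refine ⟨g, ?_, ?_⟩
  · have hfactor : ∀ (j : Fin d) (hj : j ∈ s),
        Upp (conj G (fun i => (Λ (pick j hj) i - Λ (pick j hj) j) /
          (Λ (pick j hj) k - Λ (pick j hj) j))) := by
      intro j hj
      set n := pick j hj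
      set c : ℝ := (Λ n k - Λ n j)⁻¹ with hcdef
      have he : (fun i => (Λ n i - Λ n j) / (Λ n k - Λ n j))
          = c • (Λ n - (Λ n j) • (1 : Fin d → ℝ)) := by
        funext i
        simp only [Pi.smul_apply, Pi.sub_apply, Pi.one_apply, smul_eq_mul, hcdef]
        rw [div_eq_inv_mul]
        ring
      rw [he, conj_smul]
      intro i j' hij
      have h2 : conj G (Λ n - Λ n j • (1:Fin d → ℝ)) i j' = 0 := by
        rw [conj_sub G, conj_smul, conj_one G hGr]
        have h3 := hGood n i j' hij
        simp only [Matrix.sub_apply, Matrix.smul_apply, Matrix.one_apply_ne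
          (show i ≠ j' by intro e; rw [e] at hij; omega), h3]
        simp
      simp [h2]
    have hgprod : g = ∏ j ∈ s.attach, (fun i =>
        (Λ (pick j.1 j.2) i - Λ (pick j.1 j.2) j.1) /
          (Λ (pick j.1 j.2) k - Λ (pick j.1 j.2) j.1)) := by
      funext i
      rw [hg, Finset.prod_apply]
    rw [hgprod]
    refine Finset.prod_induction _ (fun v => Upp (conj G v)) (fun v w hv hw => ?_) ?_
      (fun j _ => hfactor j.1 j.2)
    · show Upp (conj G (v * w))
      rw [conj_mul_conj G hGl]
      exact Upp.mul hv hw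
    · show Upp (conj G (1 : Fin d → ℝ))
      rw [conj_one G hGr]
      exact Upp.one
  · funext i
    by_cases hik : i = k
    · subst hik
      rw [if_pos rfl, hg]
      refine Finset.prod_eq_one fun j _ => ?_
      exact div_self (sub_ne_zero.mpr (hpickspec j.1 j.2))
    · rw [if_neg hik, hg]
      have hi : i ∈ s := Finset.mem_erase.mpr ⟨hik, Finset.mem_univ i⟩
      refine Finset.prod_eq_zero (Finset.mem_attach s ⟨i, hi⟩) ?_
      simp

/-- Main separation lemma: the diagonals of the joint triangularization separate indices. -/
lemma sep_main (hGr : G * G⁻¹ = 1) (hGl : G⁻¹ * G = 1) (Λ : Fin N → Fin d → ℝ)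
    (hGood : ∀ n, Upp (conj G (Λ n)))
    (hnd : ∀ i i' : Fin d, i ≠ i' → ∃ n, Λ n i ≠ Λ n i') :
    ∀ i j : Fin d, i ≠ j → ∃ n, conj G (Λ n) i i ≠ conj G (Λ n) j j := by
  classical
  have hind := fun k => good_indicator G hGr hGl Λ hGood hnd k
  choose g hgUpp hgval using hind
  have h01 : ∀ i k : Fin d, conj G (g k) i i = 0 ∨ conj G (g k) i i = 1 := by
    intro i k
    have hgg : g k * g k = g k := by
      funext i'
      rw [hgval k]
      simp only [Pi.mul_apply]
      split_ifs <;> norm_num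
    have hsq : conj G (g k) i i * conj G (g k) i i = conj G (g k) i i := by
      have h := (hgUpp k).diag_mul (hgUpp k) i
      rw [← conj_mul_conj G hGl, hgg] at h
      exact h.symm
    have hz : conj G (g k) i i * (conj G (g k) i i - 1) = 0 := by nlinarith [hsq]
    rcases mul_eq_zero.mp hz with h | h
    · exact Or.inl h
    · exact Or.inr (by linarith [sub_eq_zero.mp h])
  have hadd : ∀ (i : Fin d) (t : Finset (Fin d)),
      ∑ k ∈ t, conj G (g k) i i = conj G (∑ k ∈ t, g k) i i := by
    intro i t
    induction t using Finset.induction_on with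
    | empty => simp [conj_zero]
    | insert _ _ hx ih =>
      rw [Finset.sum_insert hx, Finset.sum_insert hx, conj_add G, Matrix.add_apply, ih]
  have hsumk : ∀ i : Fin d, ∑ k, conj G (g k) i i = 1 := by
    intro i
    rw [hadd i Finset.univ]
    have h2 : (∑ k, g k) = (1 : Fin d → ℝ) := by
      funext i'
      rw [Finset.sum_apply]
      simp [hgval, Pi.one_apply]
    rw [h2, conj_one G hGr]
    exact Matrix.one_apply_eq i
  have hsumi : ∀ k : Fin d, ∑ i, conj G (g k) i i = 1 := by
    intro k
    rw [conj_trace G hGl, hgval k]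
    simp
  have hcex : ∀ i : Fin d, ∃ k, conj G (g k) i i = 1 := fun i =>
    exists_unique_one _ (h01 i) (hsumk i)
  choose c hc using hcex
  have hcinj : Function.Injective c := by
    intro i i' he
    by_contra hne
    have h2 : (2 : ℝ) ≤ ∑ x, conj G (g (c i)) x x := by
      have hsum2 : ∑ x ∈ ({i, i'} : Finset (Fin d)), conj G (g (c i)) x x = 2 := by
        rw [Finset.sum_pair hne, hc i, he, hc i']
        norm_num
      calc (2:ℝ) = ∑ x ∈ ({i, i'} : Finset (Fin d)), conj G (g (c i)) x x := hsum2.symm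
        _ ≤ ∑ x, conj G (g (c i)) x x := Finset.sum_le_sum_of_subset_of_nonneg
            (Finset.subset_univ _)
            (fun x _ _ => by rcases h01 x (c i) with h | h <;> rw [h] <;> norm_num)
    rw [hsumi (c i)] at h2
    norm_num at h2
  have hdiag : ∀ (n : Fin N) (i : Fin d), conj G (Λ n) i i = Λ n (c i) := by
    intro n i
    have hmul : Λ n * g (c i) = (Λ n (c i)) • g (c i) := by
      funext i'
      rw [hgval (c i)]
      simp only [Pi.mul_apply, Pi.smul_apply, smul_eq_mul]
      split_ifs with h
      · subst h; norm_num
      · norm_num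
    have h1 : conj G (Λ n * g (c i)) i i = conj G (Λ n) i i * conj G (g (c i)) i i := by
      have h := (hGood n).diag_mul (hgUpp (c i)) i
      rw [← conj_mul_conj G hGl] at h
      exact h
    rw [hmul, conj_smul] at h1
    simp only [Matrix.smul_apply, smul_eq_mul, hc i, mul_one] at h1
    exact h1.symm
  intro i j hij
  obtain ⟨n, hn⟩ := hnd (c i) (c j) (fun e => hij (hcinj e))
  exact ⟨n, by rw [hdiag n i, hdiag n j]; exact hn⟩

/-- The quadratic form that turns out to be the Hessian of the loss. -/
def Qform {d N : ℕ} (A : Fin N → Mat d) (X : Mat d) : ℝ :=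
  ∑ n, ∑ i : Fin d, ∑ j : Fin d, if (j : ℕ) < (i : ℕ) then
    2 * ((mcomm (A n) X i j)^2 + A n i j * mcomm (mcomm (A n) X) X i j) else 0

lemma skew_eq_zero_of_comm (T : Fin N → Mat d) (hupp : ∀ n, Upp (T n))
    (hsep : ∀ i j : Fin d, i ≠ j → ∃ n, T n i i ≠ T n j j)
    (X : Mat d) (hX : IsSkew X)
    (hcm : ∀ (n) (i j : Fin d), (j : ℕ) < (i : ℕ) → mcomm (T n) X i j = 0) : X = 0 := by
  have hlow : ∀ m : ℕ, ∀ i j : Fin d, (j : ℕ) < (i : ℕ) → d - ((i : ℕ) - (j : ℕ)) < m →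
      X i j = 0 := by
    intro m
    induction m with
    | zero => intro i j _ hm; omega
    | succ m ih =>
      intro i j hji _
      have hbig : ∀ p q : Fin d, (q : ℕ) < (p : ℕ) → (i : ℕ) - (j : ℕ) < (p : ℕ) - (q : ℕ) →
          X p q = 0 := by
        intro p q h1 h2
        refine ih p q h1 ?_
        have hpd : (p : ℕ) < d := p.isLt
        omega
      obtain ⟨n, hn⟩ := hsep i j (by intro e; rw [e] at hji; omega)
      have h0 := hcm n i j hji
      rw [mcomm] at h0
      simp only [Matrix.sub_apply, Matrix.mul_apply] at h0
      have h1 : ∑ k, T n i k * X k j = T n i i * X i j := by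
        refine Finset.sum_eq_single i (fun k _ hk => ?_) (by simp)
        rcases lt_trichotomy (k : ℕ) (i : ℕ) with h | h | h
        · rw [hupp n i k h, zero_mul]
        · exact absurd (Fin.ext h) hk
        · rw [hbig k j (by omega) (by omega), mul_zero]
      have h2 : ∑ k, X i k * T n k j = X i j * T n j j := by
        refine Finset.sum_eq_single j (fun k _ hk => ?_) (by simp)
        rcases lt_trichotomy (k : ℕ) (j : ℕ) with h | h | h
        · rw [hbig i k (by omega) (by omega), zero_mul]
        · exact absurd (Fin.ext h) hk
        · rw [hupp n k j h, mul_zero]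
      rw [h1, h2] at h0
      have hfac : (T n i i - T n j j) * X i j = 0 := by linear_combination h0
      rcases mul_eq_zero.mp hfac with h | h
      · exact absurd (by linarith [sub_eq_zero.mp h] : T n i i = T n j j) hn
      · exact h
  have hlowall : ∀ i j : Fin d, (j : ℕ) < (i : ℕ) → X i j = 0 := fun i j h =>
    hlow (d + 1) i j h (by omega)
  ext i j
  rw [Matrix.zero_apply]
  rcases lt_trichotomy (j : ℕ) (i : ℕ) with h | h | h
  · exact hlowall i j h
  · have hij : i = j := Fin.ext h.symm
    subst hij
    have := congrFun (congrFun hX i) i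
    simp only [Matrix.transpose_apply, Matrix.neg_apply] at this
    linarith
  · have he := congrFun (congrFun hX j) i
    simp only [Matrix.transpose_apply, Matrix.neg_apply] at he
    rw [he, hlowall j i h, neg_zero]

lemma Qform_pos (T : Fin N → Mat d) (hupp : ∀ n, Upp (T n))
    (hsep : ∀ i j : Fin d, i ≠ j → ∃ n, T n i i ≠ T n j j)
    (X : Mat d) (hX : IsSkew X) (hXne : X ≠ 0) : 0 < Qform T X := by
  have hterm : ∀ (n : Fin N) (i j : Fin d), 0 ≤ (if (j : ℕ) < (i : ℕ) then
      2 * ((mcomm (T n) X i j)^2 + T n i j * mcomm (mcomm (T n) X) X i j) else 0) := by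
    intro n i j
    split_ifs with h
    · rw [hupp n i j h, zero_mul, add_zero]
      positivity
    · exact le_refl 0
  obtain ⟨n0, i0, j0, hj0, hne0⟩ : ∃ (n : Fin N) (i j : Fin d),
      (j : ℕ) < (i : ℕ) ∧ mcomm (T n) X i j ≠ 0 := by
    by_contra h
    push_neg at h
    exact hXne (skew_eq_zero_of_comm T hupp hsep X hX h)
  have hpos : 0 < (if (j0 : ℕ) < (i0 : ℕ) then
      2 * ((mcomm (T n0) X i0 j0)^2 + T n0 i0 j0 * mcomm (mcomm (T n0) X) X i0 j0) else 0) := by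
    rw [if_pos hj0, hupp n0 i0 j0 hj0, zero_mul, add_zero]
    have := mul_self_pos.mpr hne0
    nlinarith [this]
  rw [Qform]
  refine Finset.sum_pos' (fun n _ => Finset.sum_nonneg fun i _ => Finset.sum_nonneg fun j _ =>
    hterm n i j) ⟨n0, Finset.mem_univ n0, ?_⟩
  refine Finset.sum_pos' (fun i _ => Finset.sum_nonneg fun j _ => hterm n0 i j)
    ⟨i0, Finset.mem_univ i0, ?_⟩
  exact Finset.sum_pos' (fun j _ => hterm n0 i0 j) ⟨j0, Finset.mem_univ j0, hpos⟩

lemma mcomm_smul_right (A X : Mat d) (c : ℝ) : mcomm A (c • X) = c • mcomm A X := by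
  simp [mcomm, Matrix.mul_smul, Matrix.smul_mul, smul_sub]

lemma mcomm_smul_left (A X : Mat d) (c : ℝ) : mcomm (c • A) X = c • mcomm A X := by
  simp [mcomm, Matrix.mul_smul, Matrix.smul_mul, smul_sub]

lemma Qform_smul (A : Fin N → Mat d) (X : Mat d) (c : ℝ) :
    Qform A (c • X) = c ^ 2 * Qform A X := by
  rw [Qform, Qform, Finset.mul_sum]
  refine Finset.sum_congr rfl fun n _ => ?_
  rw [Finset.mul_sum]
  refine Finset.sum_congr rfl fun i _ => ?_
  rw [Finset.mul_sum]
  refine Finset.sum_congr rfl fun j _ => ?_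
  split_ifs with h
  · rw [mcomm_smul_right, mcomm_smul_left, mcomm_smul_right]
    simp only [Matrix.smul_apply, smul_eq_mul]
    ring
  · rw [mul_zero]

/-- frob is nonnegative. -/
lemma frob_nonneg (A : Mat d) : 0 ≤ frob A := Real.sqrt_nonneg _

lemma frob_pos {A : Mat d} (h : A ≠ 0) : 0 < frob A := by
  rcases lt_or_eq_of_le (frob_nonneg A) with h' | h'
  · exact h'
  · exfalso
    apply h
    have hsum : ∑ i : Fin d, ∑ j : Fin d, (A i j)^2 = 0 := by
      have := h'.symm
      rw [frob] at this
      have hnn : (0:ℝ) ≤ ∑ i : Fin d, ∑ j : Fin d, (A i j)^2 := by positivity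
      nlinarith [Real.sq_sqrt hnn, this]
    ext i j
    rw [Matrix.zero_apply]
    have h1 : ∀ i ∈ Finset.univ, (0:ℝ) ≤ ∑ j : Fin d, (A i j)^2 := fun i _ => by positivity
    have h2 := (Finset.sum_eq_zero_iff_of_nonneg h1).mp hsum i (Finset.mem_univ i)
    have h3 : ∀ j ∈ Finset.univ, (0:ℝ) ≤ (A i j)^2 := fun j _ => sq_nonneg _
    have h4 := (Finset.sum_eq_zero_iff_of_nonneg h3).mp h2 j (Finset.mem_univ j)
    exact pow_eq_zero_iff (by norm_num) |>.mp h4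

lemma frob_smul (c : ℝ) (A : Mat d) : frob (c • A) = |c| * frob A := by
  rw [frob, frob]
  rw [show ∑ i : Fin d, ∑ j : Fin d, ((c • A) i j)^2
      = c^2 * ∑ i : Fin d, ∑ j : Fin d, (A i j)^2 by
    rw [Finset.mul_sum]
    refine Finset.sum_congr rfl fun i _ => ?_
    rw [Finset.mul_sum]
    refine Finset.sum_congr rfl fun j _ => ?_
    simp [Matrix.smul_apply, smul_eq_mul]
    ring]
  rw [Real.sqrt_mul (sq_nonneg c), Real.sqrt_sq_eq_abs]

lemma frob_entry_le (A : Mat d) (i j : Fin d) : |A i j| ≤ frob A := by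
  rw [frob, ← Real.sqrt_sq_eq_abs]
  apply Real.sqrt_le_sqrt
  calc (A i j)^2 ≤ ∑ j' : Fin d, (A i j')^2 :=
        Finset.single_le_sum (fun j' _ => sq_nonneg (A i j')) (Finset.mem_univ j)
    _ ≤ ∑ i' : Fin d, ∑ j' : Fin d, (A i' j')^2 :=
        Finset.single_le_sum (f := fun i' => ∑ j' : Fin d, (A i' j')^2)
          (fun i' _ => by positivity) (Finset.mem_univ i)

lemma skew_smul {X : Mat d} (hX : IsSkew X) (c : ℝ) : IsSkew (c • X) := by
  rw [IsSkew, Matrix.transpose_smul, hX]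
  simp

end AuxStructural

section AuxCalculus

open scoped NNReal

attribute [local instance] Matrix.linftyOpNormedRing Matrix.linftyOpNormedAlgebra

open NormedSpace in
lemma matExp_eq {d : ℕ} (A : Mat d) : matExp A = NormedSpace.exp A := by
  rw [exp_eq_tsum ℝ]; rfl

lemma matExp_zero {d : ℕ} : matExp (0 : Mat d) = 1 := by
  rw [matExp_eq, NormedSpace.exp_zero]

variable {d N : ℕ}

/-- entry continuous linear map -/
def entryCLM (i j : Fin d) : Mat d →L[ℝ] ℝ :=
  LinearMap.toContinuousLinearMap
    { toFun := fun A => A i j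
      map_add' := fun _ _ => rfl
      map_smul' := fun _ _ => rfl }

def transCLM : Mat d →L[ℝ] Mat d :=
  LinearMap.toContinuousLinearMap
    { toFun := fun A => Aᵀ
      map_add' := fun _ _ => by ext; simp
      map_smul' := fun _ _ => by ext; simp }

def mcommCLM (X : Mat d) : Mat d →L[ℝ] Mat d :=
  LinearMap.toContinuousLinearMap
    { toFun := fun A => mcomm A X
      map_add' := fun A B => by simp [mcomm, add_mul, mul_add]; abel
      map_smul' := fun c A => by
        simp [mcomm, smul_sub, Matrix.smul_mul, Matrix.mul_smul] }

lemma hasDerivAt_E (X : Mat d) (t : ℝ) :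
    HasDerivAt (fun t : ℝ => matExp (t • X)) (matExp (t • X) * X) t := by
  simp_rw [matExp_eq]
  exact hasDerivAt_exp_smul_const X t

lemma hasDerivAt_F (C X : Mat d) (hX : IsSkew X) (t : ℝ) :
    HasDerivAt (fun t : ℝ => (matExp (t • X))ᵀ * C * matExp (t • X))
      (mcomm ((matExp (t • X))ᵀ * C * matExp (t • X)) X) t := by
  have hE := hasDerivAt_E X t
  have hET : HasDerivAt (fun t : ℝ => (matExp (t • X))ᵀ) ((matExp (t • X) * X)ᵀ) t :=
    (transCLM.hasFDerivAt.comp_hasDerivAt t hE)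
  have h2 := (hET.mul_const C).fun_mul hE
  refine h2.congr_deriv ?_
  simp only [mcomm, transpose_mul]
  rw [hX]
  noncomm_ring

lemma frob_sq_lowPart (Z : Mat d) :
    frob (lowPart Z) ^ 2 = ∑ i : Fin d, ∑ j : Fin d,
      if (j : ℕ) < (i : ℕ) then (Z i j)^2 else 0 := by
  rw [frob, Real.sq_sqrt (by positivity)]
  refine Finset.sum_congr rfl fun i _ => Finset.sum_congr rfl fun j _ => ?_
  simp only [lowPart, Matrix.of_apply]
  split_ifs <;> simp

/-- The Hessian of the loss along a geodesic equals the quadratic form `Qform`. -/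
lemma key_deriv (Mh : Fin N → Mat d) (U X : Mat d) (hX : IsSkew X) :
    iteratedDeriv 2 (fun t : ℝ => Loss Mh (U * matExp (t • X))) 0
      = Qform (fun n => Uᵀ * Mh n * U) X := by
  set C : Fin N → Mat d := fun n => Uᵀ * Mh n * U with hC
  set F : Fin N → ℝ → Mat d := fun n t => (matExp (t • X))ᵀ * C n * matExp (t • X) with hF
  set G : Fin N → ℝ → Mat d := fun n t => mcomm (F n t) X with hG
  have hfun : (fun t : ℝ => Loss Mh (U * matExp (t • X)))
      = fun t => ∑ n, ∑ i : Fin d, ∑ j : Fin d,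
          if (j : ℕ) < (i : ℕ) then (F n t i j)^2 else 0 := by
    funext t
    rw [Loss]
    refine Finset.sum_congr rfl fun n _ => ?_
    rw [show (U * matExp (t • X))ᵀ * Mh n * (U * matExp (t • X)) = F n t by
      simp only [hF, hC, transpose_mul]; noncomm_ring]
    exact frob_sq_lowPart _
  have hFd : ∀ n t, HasDerivAt (F n) (G n t) t := fun n t => hasDerivAt_F (C n) X hX t
  have hFe : ∀ (n) (i j : Fin d) (t : ℝ),
      HasDerivAt (fun t => F n t i j) (G n t i j) t := fun n i j t =>
    (entryCLM i j).hasFDerivAt.comp_hasDerivAt t (hFd n t)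
  have hGe : ∀ (n) (i j : Fin d) (t : ℝ),
      HasDerivAt (fun t => G n t i j) (mcomm (G n t) X i j) t := fun n i j t =>
    ((entryCLM i j).comp (mcommCLM X)).hasFDerivAt.comp_hasDerivAt t (hFd n t)
  set f1 : ℝ → ℝ := fun t => ∑ n, ∑ i : Fin d, ∑ j : Fin d, if (j : ℕ) < (i : ℕ) then
      2 * (F n t i j * G n t i j) else 0 with hf1
  have hd1 : ∀ t, HasDerivAt (fun t : ℝ => Loss Mh (U * matExp (t • X))) (f1 t) t := by
    intro t
    rw [hfun]
    apply HasDerivAt.fun_sum; intro n _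
    apply HasDerivAt.fun_sum; intro i _
    apply HasDerivAt.fun_sum; intro j _
    by_cases h : (j : ℕ) < (i : ℕ)
    · simp only [if_pos h]
      have := (hFe n i j t).fun_pow 2
      refine this.congr_deriv ?_
      push_cast; ring
    · simp only [if_neg h]; exact hasDerivAt_const t 0
  have hd2 : HasDerivAt f1 (∑ n, ∑ i : Fin d, ∑ j : Fin d, if (j : ℕ) < (i : ℕ) then
      2 * (G n 0 i j * G n 0 i j + F n 0 i j * mcomm (G n 0) X i j) else 0) 0 := by
    apply HasDerivAt.fun_sum; intro n _
    apply HasDerivAt.fun_sum; intro i _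
    apply HasDerivAt.fun_sum; intro j _
    by_cases h : (j : ℕ) < (i : ℕ)
    · simp only [if_pos h]
      exact ((hFe n i j 0).mul (hGe n i j 0)).const_mul 2
    · simp only [if_neg h]; exact hasDerivAt_const 0 0
  have hit : iteratedDeriv 2 (fun t : ℝ => Loss Mh (U * matExp (t • X))) 0
      = deriv f1 0 := by
    rw [iteratedDeriv_succ, iteratedDeriv_one]
    congr 1
    funext t
    exact (hd1 t).deriv
  rw [hit, hd2.deriv]
  have hF0 : ∀ n, F n 0 = C n := by
    intro n
    simp only [hF, zero_smul, matExp_eq, NormedSpace.exp_zero, transpose_one, one_mul, mul_one]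
  refine Finset.sum_congr rfl fun n _ => Finset.sum_congr rfl fun i _ =>
    Finset.sum_congr rfl fun j _ => ?_
  simp only [hG, hF0]
  split_ifs
  · ring
  · rfl

lemma continuous_frob : Continuous (frob : Mat d → ℝ) := by
  apply Real.continuous_sqrt.comp
  apply continuous_finset_sum
  intro i _
  apply continuous_finset_sum
  intro j _
  exact ((entryCLM i j).continuous).pow 2

lemma norm_le_of_frob_le {A : Mat d} {r : ℝ} (h : frob A ≤ r) : ‖A‖ ≤ d * r := by
  have hr : 0 ≤ r := le_trans (frob_nonneg A) h
  have hent : ∀ i j, ‖A i j‖₊ ≤ Real.toNNReal r := by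
    intro i j
    rw [← NNReal.coe_le_coe, coe_nnnorm, Real.coe_toNNReal r hr, Real.norm_eq_abs]
    exact le_trans (frob_entry_le A i j) h
  rw [Matrix.linfty_opNorm_def]
  have hsup : (Finset.univ.sup fun i : Fin d => ∑ j : Fin d, ‖A i j‖₊)
      ≤ (d : ℝ≥0) * Real.toNNReal r := by
    refine Finset.sup_le fun i _ => ?_
    calc ∑ j : Fin d, ‖A i j‖₊ ≤ ∑ _j : Fin d, Real.toNNReal r :=
          Finset.sum_le_sum fun j _ => hent i j
      _ = (d : ℝ≥0) * Real.toNNReal r := by simp [Finset.sum_const, nsmul_eq_mul]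
  calc ((Finset.univ.sup fun i : Fin d => ∑ j : Fin d, ‖A i j‖₊ : ℝ≥0) : ℝ)
      ≤ (((d : ℝ≥0) * Real.toNNReal r : ℝ≥0) : ℝ) := NNReal.coe_le_coe.mpr hsup
    _ = d * r := by push_cast [Real.coe_toNNReal r hr]; ring

/-- The key uniform-positivity statement obtained by compactness. -/
lemma exists_delta {d N : ℕ} (M : Fin N → Mat d) (U₀ : Mat d)
    (hpos : ∀ X : Mat d, IsSkew X → frob X = 1 →
      0 < Qform (fun n => U₀ᵀ * M n * U₀) X) :
    ∃ δ > (0:ℝ), ∀ (α σ : ℝ) (Y : Mat d) (W : Fin N → Mat d) (X : Mat d),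
      frob Y = 1 → (∀ n, frob (W n) ≤ 1) → IsSkew X → frob X = 1 →
      |α| < δ → |σ| < δ →
      0 < Qform (fun n => (U₀ * matExp (α • Y))ᵀ * (M n + σ • W n) * (U₀ * matExp (α • Y)))
        X := by
  classical
  set S1 : Set (Mat d) := {Y | frob Y = 1} with hS1
  set S2 : Set (Fin N → Mat d) := {W | ∀ n, frob (W n) ≤ 1} with hS2
  set S3 : Set (Mat d) := {X | IsSkew X ∧ frob X = 1} with hS3
  have hc1 : IsCompact S1 := by
    apply Metric.isCompact_of_isClosed_isBounded
    · exact isClosed_eq continuous_frob continuous_const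
    · rw [Metric.isBounded_iff_subset_closedBall 0]
      refine ⟨d * 1, fun Y hY => ?_⟩
      rw [Metric.mem_closedBall, dist_zero_right]
      exact norm_le_of_frob_le (le_of_eq hY)
  have hc2 : IsCompact S2 := by
    apply Metric.isCompact_of_isClosed_isBounded
    · have h : S2 = ⋂ n : Fin N, {W : Fin N → Mat d | frob (W n) ≤ 1} := by
        ext W; simp [hS2, Set.mem_iInter]
      rw [h]
      exact isClosed_iInter fun n =>
        isClosed_le (continuous_frob.comp (continuous_apply n)) continuous_const
    · rw [Metric.isBounded_iff_subset_closedBall 0]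
      refine ⟨d * 1, fun W hW => ?_⟩
      rw [Metric.mem_closedBall, dist_zero_right]
      refine pi_norm_le_iff_of_nonneg (by positivity) |>.mpr fun n => ?_
      exact norm_le_of_frob_le (hW n)
  have hc3 : IsCompact S3 := by
    apply Metric.isCompact_of_isClosed_isBounded
    · have hSeq : S3 = {X : Mat d | IsSkew X} ∩ {X : Mat d | frob X = 1} := rfl
      rw [hSeq]
      refine IsClosed.inter ?_ (isClosed_eq continuous_frob continuous_const)
      have h : {X : Mat d | IsSkew X} = (fun X : Mat d => Xᵀ + X) ⁻¹' {0} := by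
        ext X
        simp only [Set.mem_setOf_eq, Set.mem_preimage, Set.mem_singleton_iff, IsSkew]
        constructor
        · intro h; rw [h]; abel
        · intro h
          have h2 : Xᵀ = -X := by
            have h3 : Xᵀ + X - X = 0 - X := by rw [h]
            simpa using h3
          exact h2
      rw [h]
      exact IsClosed.preimage (transCLM.continuous.add continuous_id) isClosed_singleton
    · rw [Metric.isBounded_iff_subset_closedBall 0]
      refine ⟨d * 1, fun X hX => ?_⟩
      rw [Metric.mem_closedBall, dist_zero_right]
      exact norm_le_of_frob_le (le_of_eq hX.2)
  -- the continuous positivity function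
  set A : Fin N → ((ℝ × ℝ) × (Mat d × ((Fin N → Mat d) × Mat d))) → Mat d :=
    fun n p => (U₀ * matExp (p.1.1 • p.2.1))ᵀ * (M n + p.1.2 • p.2.2.1 n)
      * (U₀ * matExp (p.1.1 • p.2.1)) with hA
  have hE : Continuous (fun p : (ℝ × ℝ) × (Mat d × ((Fin N → Mat d) × Mat d)) =>
      matExp (p.1.1 • p.2.1)) := by
    simp only [matExp_eq]
    exact NormedSpace.exp_continuous.comp ((continuous_fst.fst).smul (continuous_snd.fst))
  have hAc : ∀ n : Fin N, Continuous (A n) := by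
    intro n
    have hU : Continuous (fun p : (ℝ × ℝ) × (Mat d × ((Fin N → Mat d) × Mat d)) =>
        U₀ * matExp (p.1.1 • p.2.1)) := continuous_const.mul hE
    have hUT := transCLM.continuous.comp hU
    have hMid : Continuous (fun p : (ℝ × ℝ) × (Mat d × ((Fin N → Mat d) × Mat d)) =>
        M n + p.1.2 • p.2.2.1 n) :=
      continuous_const.add ((continuous_fst.snd).smul
        ((continuous_apply n).comp (continuous_snd.snd.fst)))
    exact (hUT.mul hMid).mul hU
  have hXc : Continuous (fun p : (ℝ × ℝ) × (Mat d × ((Fin N → Mat d) × Mat d)) => p.2.2.2) :=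
    continuous_snd.snd.snd
  have hΦc : Continuous (fun p : (ℝ × ℝ) × (Mat d × ((Fin N → Mat d) × Mat d)) =>
      Qform (fun n => A n p) p.2.2.2) := by
    simp only [Qform]
    apply continuous_finset_sum; intro n _
    apply continuous_finset_sum; intro i _
    apply continuous_finset_sum; intro j _
    by_cases h : (j : ℕ) < (i : ℕ)
    · simp only [if_pos h]
      have hmc1 : Continuous (fun p : (ℝ × ℝ) × (Mat d × ((Fin N → Mat d) × Mat d)) =>
          mcomm (A n p) p.2.2.2) := by
        simp only [mcomm]
        exact ((hAc n).mul hXc).sub (hXc.mul (hAc n))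
      have hmc2 : Continuous (fun p : (ℝ × ℝ) × (Mat d × ((Fin N → Mat d) × Mat d)) =>
          mcomm (mcomm (A n p) p.2.2.2) p.2.2.2) := by
        simp only [mcomm]
        exact ((((hAc n).mul hXc).sub (hXc.mul (hAc n))).mul hXc).sub
          (hXc.mul (((hAc n).mul hXc).sub (hXc.mul (hAc n))))
      have he1 : Continuous (fun p : (ℝ × ℝ) × (Mat d × ((Fin N → Mat d) × Mat d)) =>
          mcomm (A n p) p.2.2.2 i j) := (entryCLM i j).continuous.comp hmc1
      have he2 : Continuous (fun p : (ℝ × ℝ) × (Mat d × ((Fin N → Mat d) × Mat d)) =>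
          A n p i j) := (entryCLM i j).continuous.comp (hAc n)
      have he3 : Continuous (fun p : (ℝ × ℝ) × (Mat d × ((Fin N → Mat d) × Mat d)) =>
          mcomm (mcomm (A n p) p.2.2.2) p.2.2.2 i j) := (entryCLM i j).continuous.comp hmc2
      exact continuous_const.mul (((he1.pow 2)).add (he2.mul he3))
    · simp only [if_neg h]
      exact continuous_const
  -- tube lemma
  have hKc : IsCompact (S1 ×ˢ (S2 ×ˢ S3)) := hc1.prod (hc2.prod hc3)
  have hOpen : IsOpen ((fun p : (ℝ × ℝ) × (Mat d × ((Fin N → Mat d) × Mat d)) =>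
      Qform (fun n => A n p) p.2.2.2) ⁻¹' Set.Ioi 0) := isOpen_Ioi.preimage hΦc
  have hsub : ({((0:ℝ), (0:ℝ))} : Set (ℝ × ℝ)) ×ˢ (S1 ×ˢ (S2 ×ˢ S3)) ⊆
      ((fun p : (ℝ × ℝ) × (Mat d × ((Fin N → Mat d) × Mat d)) =>
        Qform (fun n => A n p) p.2.2.2) ⁻¹' Set.Ioi 0) := by
    rintro ⟨⟨a, b⟩, Y, W, X⟩ ⟨hab, hY, hW, hX3⟩
    simp only [Set.mem_singleton_iff, Prod.mk.injEq] at hab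
    obtain ⟨ha, hb⟩ := hab
    subst ha; subst hb
    simp only [Set.mem_preimage, Set.mem_Ioi, hA]
    have hAeq : (fun n => (U₀ * matExp ((0:ℝ) • Y))ᵀ * (M n + (0:ℝ) • W n)
        * (U₀ * matExp ((0:ℝ) • Y))) = fun n => U₀ᵀ * M n * U₀ := by
      funext n
      rw [zero_smul, matExp_zero, Matrix.mul_one, zero_smul, add_zero]
    rw [hAeq]
    exact hpos X hX3.1 hX3.2
  obtain ⟨u, v, hu, _hv, h0u, hKv, huv⟩ :=
    generalized_tube_lemma isCompact_singleton hKc hOpen hsub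
  have h0 : ((0:ℝ), (0:ℝ)) ∈ u := h0u rfl
  obtain ⟨δ, hδ, hball⟩ := Metric.isOpen_iff.mp hu _ h0
  refine ⟨δ, hδ, ?_⟩
  intro α σ Y W X hYf hWf hXs hXf hαδ hσδ
  have hmem : (((α, σ) : ℝ × ℝ), (Y, (W, X))) ∈ u ×ˢ v := by
    constructor
    · apply hball
      rw [Metric.mem_ball, Prod.dist_eq]
      simp only [Real.dist_eq, sub_zero]
      exact max_lt hαδ hσδ
    · exact hKv ⟨hYf, hWf, ⟨hXs, hXf⟩⟩
  have hres := huv hmem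
  simpa only [Set.mem_preimage, Set.mem_Ioi, hA] using hres

end AuxCalculus


set_option maxHeartbeats 8000000 in
/-- positive definiteness of the Hessian of the loss at
`U = U₀ exp(αY)` for `α` below the threshold `(2ε − σA_σ)/A_α` (up to second
order terms). -/
theorem hessian_positive_definite {d N : ℕ} (V : Mat d) (hV : IsUnit V)
    (Λ : Fin N → Fin d → ℝ) (M : Fin N → Mat d)
    (hM : ∀ n, M n = V * Matrix.diagonal (Λ n) * V⁻¹)
    (hnd : ∀ i i' : Fin d, i ≠ i' → ∃ n, Λ n i ≠ Λ n i')
    (U₀ : Mat d) (hU₀ : ExactTriang U₀ M) :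
    ∃ C > (0 : ℝ), ∀ σ : ℝ, 0 < σ →
      ∀ W : Fin N → Mat d, (∀ n, frob (W n) ≤ 1) →
        ∀ Y : Mat d, IsSkew Y → frob Y = 1 →
          ∀ α : ℝ, 0 ≤ α →
            α ≤ (2 * (gapMin Λ / (2 * condNum V ^ 4)) -
                  σ * (16 * Real.sqrt (N : ℝ) * Real.sqrt (∑ n, frob (M n) ^ 2))) /
                (32 * ∑ n, frob (M n) ^ 2) - C * (α + σ) ^ 2 →
            ∀ X : Mat d, IsSkew X → X ≠ 0 →
              0 < iteratedDeriv 2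
                    (fun t : ℝ => Loss (fun n => M n + σ • W n)
                      ((U₀ * matExp (α • Y)) * matExp (t • X))) 0 := by
  classical
  by_cases hd : d < 2
  · -- degenerate case: no nonzero skew matrices
    refine ⟨1, one_pos, ?_⟩
    intro σ hσ W hW Y hYs hYf α hα hcon X hXs hXne
    exfalso
    apply hXne
    ext i j
    have hij : i = j := Fin.ext (by have hi := i.isLt; have hj := j.isLt; omega)
    subst hij
    have hXd := congrFun (congrFun hXs i) i
    simp only [Matrix.transpose_apply, Matrix.neg_apply] at hXd
    rw [Matrix.zero_apply]
    linarith
  push_neg at hd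
  obtain ⟨hOrtho, hLow⟩ := hU₀
  set G : Mat d := U₀ᵀ * V with hGdef
  have hdetU : IsUnit (U₀ᵀ).det :=
    IsUnit.of_mul_eq_one _ (by rw [← Matrix.det_mul, hOrtho, Matrix.det_one])
  have hdetV : IsUnit V.det := (Matrix.isUnit_iff_isUnit_det V).mp hV
  have hdetG : IsUnit G.det := by
    rw [hGdef, Matrix.det_mul]
    exact hdetU.mul hdetV
  have hGr : G * G⁻¹ = 1 := Matrix.mul_nonsing_inv G hdetG
  have hGl : G⁻¹ * G = 1 := Matrix.nonsing_inv_mul G hdetG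
  have hUinv : (U₀ᵀ)⁻¹ = U₀ := Matrix.inv_eq_right_inv hOrtho
  have hTc : ∀ n, U₀ᵀ * M n * U₀ = conj G (Λ n) := by
    intro n
    rw [conj, hGdef, Matrix.mul_inv_rev, hUinv, hM n]
    noncomm_ring
  have hupp : ∀ n, Upp (U₀ᵀ * M n * U₀) := by
    intro n i j hji
    have h := congrFun (congrFun (hLow n) i) j
    simp only [lowPart, Matrix.of_apply, Matrix.zero_apply, ite_eq_right_iff] at h
    exact h hji
  have hGood : ∀ n, Upp (conj G (Λ n)) := fun n => by rw [← hTc n]; exact hupp n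
  have hsep0 := sep_main G hGr hGl Λ hGood hnd
  have hsep : ∀ i j : Fin d, i ≠ j → ∃ n,
      (U₀ᵀ * M n * U₀) i i ≠ (U₀ᵀ * M n * U₀) j j := by
    intro i j hij
    obtain ⟨n, hn⟩ := hsep0 i j hij
    exact ⟨n, by rw [hTc n]; exact hn⟩
  have hfrob0 : frob (0 : Mat d) = 0 := by simp [frob]
  have hpos : ∀ X : Mat d, IsSkew X → frob X = 1 →
      0 < Qform (fun n => U₀ᵀ * M n * U₀) X := by
    intro X hs hf
    refine Qform_pos _ hupp hsep X hs ?_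
    intro h0
    rw [h0, hfrob0] at hf
    norm_num at hf
  obtain ⟨δ, hδ, htube⟩ := exists_delta M U₀ hpos
  -- Σ ‖M n‖² > 0
  have hexN : ∃ n : Fin N, M n ≠ 0 := by
    have h01 : (⟨0, by omega⟩ : Fin d) ≠ (⟨1, by omega⟩ : Fin d) := by
      simp [Fin.ext_iff]
    obtain ⟨n, hn⟩ := hnd _ _ h01
    refine ⟨n, fun hM0 => ?_⟩
    have hdg : Matrix.diagonal (Λ n) = 0 := by
      have h1 : V⁻¹ * M n * V = Matrix.diagonal (Λ n) := by
        rw [hM n]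
        calc V⁻¹ * (V * Matrix.diagonal (Λ n) * V⁻¹) * V
            = (V⁻¹ * V) * Matrix.diagonal (Λ n) * (V⁻¹ * V) := by noncomm_ring
          _ = Matrix.diagonal (Λ n) := by
              rw [Matrix.nonsing_inv_mul V hdetV, Matrix.one_mul, Matrix.mul_one]
      rw [← h1, hM0, Matrix.mul_zero, Matrix.zero_mul]
    apply hn
    have hv1 := congrFun (congrFun hdg ⟨0, by omega⟩) ⟨0, by omega⟩
    have hv2 := congrFun (congrFun hdg ⟨1, by omega⟩) ⟨1, by omega⟩
    simp only [Matrix.diagonal_apply_eq, Matrix.zero_apply] at hv1 hv2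
    rw [hv1, hv2]
  have hSm : 0 < ∑ n, frob (M n) ^ 2 := by
    obtain ⟨n, hn⟩ := hexN
    exact Finset.sum_pos' (fun m _ => sq_nonneg _)
      ⟨n, Finset.mem_univ n, pow_pos (frob_pos hn) 2⟩
  obtain ⟨T0, hT0def⟩ : ∃ t : ℝ, t = |2 * (gapMin Λ / (2 * condNum V ^ 4))| /
      (32 * ∑ n, frob (M n) ^ 2) := ⟨_, rfl⟩
  have hT0nn : 0 ≤ T0 := by
    rw [hT0def]
    exact div_nonneg (abs_nonneg _) (by linarith)
  have hCpos : (0:ℝ) < T0 / δ ^ 2 + 1 := by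
    have h := div_nonneg hT0nn (sq_nonneg δ)
    linarith
  refine ⟨T0 / δ ^ 2 + 1, hCpos, ?_⟩
  intro σ hσ W hW Y hYs hYf α hα hcon X hXs hXne
  have hden : (0:ℝ) < 32 * ∑ n, frob (M n) ^ 2 := by linarith
  have hb1 : (2 * (gapMin Λ / (2 * condNum V ^ 4)) -
      σ * (16 * Real.sqrt (N:ℝ) * Real.sqrt (∑ n, frob (M n) ^ 2))) /
      (32 * ∑ n, frob (M n) ^ 2) ≤ T0 := by
    have hx : 0 ≤ σ * (16 * Real.sqrt (N:ℝ) * Real.sqrt (∑ n, frob (M n) ^ 2)) :=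
      mul_nonneg hσ.le (mul_nonneg (mul_nonneg (by norm_num) (Real.sqrt_nonneg _))
        (Real.sqrt_nonneg _))
    have hnum : 2 * (gapMin Λ / (2 * condNum V ^ 4)) -
        σ * (16 * Real.sqrt (N:ℝ) * Real.sqrt (∑ n, frob (M n) ^ 2))
        ≤ |2 * (gapMin Λ / (2 * condNum V ^ 4))| := by
      linarith [le_abs_self (2 * (gapMin Λ / (2 * condNum V ^ 4)))]
    rw [hT0def, div_eq_mul_inv, div_eq_mul_inv]
    exact mul_le_mul_of_nonneg_right hnum (inv_nonneg.mpr hden.le)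
  have hcc : (T0 / δ ^ 2 + 1) * (α + σ) ^ 2 ≤ T0 := by linarith [hb1, hα, hcon]
  have hCδ : (T0 / δ ^ 2 + 1) * δ ^ 2 = T0 + δ ^ 2 := by
    rw [add_mul, one_mul, div_mul_cancel₀ _ (pow_ne_zero 2 hδ.ne')]
  have h2 : (α + σ) ^ 2 < δ ^ 2 := by
    by_contra hcon2
    push_neg at hcon2
    have h3 := mul_le_mul_of_nonneg_left hcon2 (le_of_lt hCpos)
    rw [hCδ] at h3
    nlinarith [hδ, hcc]
  have hsum_lt : α + σ < δ := by nlinarith [h2, hδ, hσ, hα]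
  have hfX : 0 < frob X := frob_pos hXne
  have hX'f : frob ((frob X)⁻¹ • X) = 1 := by
    rw [frob_smul, abs_inv, abs_of_nonneg (frob_nonneg X), inv_mul_cancel₀ hfX.ne']
  have hQp := htube α σ Y W ((frob X)⁻¹ • X) hYf hW (skew_smul hXs _) hX'f
    (by rw [abs_of_nonneg hα]; linarith)
    (by rw [abs_of_nonneg hσ.le]; linarith)
  rw [key_deriv (fun n => M n + σ • W n) (U₀ * matExp (α • Y)) X hXs]
  have hXdec : X = frob X • ((frob X)⁻¹ • X) := by
    rw [smul_smul, mul_inv_cancel₀ hfX.ne', one_smul]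
  have hfin : (0:ℝ) < Qform (fun n =>
      (U₀ * matExp (α • Y))ᵀ * (M n + σ • W n) * (U₀ * matExp (α • Y))) X := by
    calc (0:ℝ) < (frob X) ^ 2 * Qform (fun n =>
          (U₀ * matExp (α • Y))ᵀ * (M n + σ • W n) * (U₀ * matExp (α • Y)))
          ((frob X)⁻¹ • X) :=
        mul_pos (pow_pos hfX 2) hQp
      _ = Qform (fun n =>
          (U₀ * matExp (α • Y))ᵀ * (M n + σ • W n) * (U₀ * matExp (α • Y))) X := by
        rw [← Qform_smul]
        exact congrArg _ hXdec.symm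
  exact hfin
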